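/- For every secant plane π, |α(π)| = (q^2+q)/2 and |β(π)| = (q^2-q)/2. -/
import Mathlib


open Submodule Set

/-- The points of `PG(3,q)`: the 1-dimensional subspaces of a 4-dimensional
vector space over the field `K` of order `q`. -/
def pgPoint (K : Type) [Field K] : Set (Submodule K (Fin 4 → K)) :=
  {W | Module.finrank K ↥W = 1}

/-- The lines of `PG(3,q)`: the 2-dimensional subspaces. -/
def pgLine (K : Type) [Field K] : Set (Submodule K (Fin 4 → K)) :=
  {W | Module.finrank K ↥W = 2}

/-- The planes of `PG(3,q)`: the 3-dimensional subspaces. -/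
def pgPlane (K : Type) [Field K] : Set (Submodule K (Fin 4 → K)) :=
  {W | Module.finrank K ↥W = 3}

/-- The lines of the family `S` passing through the point `p`. -/
def linesThru (K : Type) [Field K] (S : Set (Submodule K (Fin 4 → K)))
    (p : Submodule K (Fin 4 → K)) : Set (Submodule K (Fin 4 → K)) :=
  {l | l ∈ S ∧ p ≤ l}

/-- The lines of the family `S` contained in the plane `π` (the set `S_π`). -/
def linesIn (K : Type) [Field K] (S : Set (Submodule K (Fin 4 → K)))
    (π : Submodule K (Fin 4 → K)) : Set (Submodule K (Fin 4 → K)) :=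
  {l | l ∈ S ∧ l ≤ π}

/-- The lines of `S_π` belonging to the pencil of lines of the plane `π`
through the point `p`. -/
def pencilS (K : Type) [Field K] (S : Set (Submodule K (Fin 4 → K)))
    (p π : Submodule K (Fin 4 → K)) : Set (Submodule K (Fin 4 → K)) :=
  {l | l ∈ S ∧ p ≤ l ∧ l ≤ π}

/-- Property (P1): every point lies on exactly `q(q+1)/2` or exactly `q^2`
lines of `S`, and both numbers are attained. -/
def P1 (K : Type) [Field K] (S : Set (Submodule K (Fin 4 → K))) (q : ℕ) : Prop :=
  (∀ p ∈ pgPoint K, (linesThru K S p).ncard = q * (q + 1) / 2 ∨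
      (linesThru K S p).ncard = q ^ 2) ∧
  (∃ p ∈ pgPoint K, (linesThru K S p).ncard = q * (q + 1) / 2) ∧
  (∃ p ∈ pgPoint K, (linesThru K S p).ncard = q ^ 2)

/-- Property (P2): every plane contains exactly `q(q+1)/2` or exactly `q^2`
lines of `S`. -/
def P2 (K : Type) [Field K] (S : Set (Submodule K (Fin 4 → K))) (q : ℕ) : Prop :=
  ∀ π ∈ pgPlane K, (linesIn K S π).ncard = q * (q + 1) / 2 ∨
    (linesIn K S π).ncard = q ^ 2

/-- Property (P2a): if a plane contains `q^2` lines of `S`, then every pencil of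
lines in that plane contains `0` or `q` lines of `S`. -/
def P2a (K : Type) [Field K] (S : Set (Submodule K (Fin 4 → K))) (q : ℕ) : Prop :=
  ∀ π ∈ pgPlane K, (linesIn K S π).ncard = q ^ 2 →
    ∀ p ∈ pgPoint K, p ≤ π →
      (pencilS K S p π).ncard = 0 ∨ (pencilS K S p π).ncard = q

/-- Property (P2b): if a plane contains `q(q+1)/2` lines of `S`, then every
pencil of lines in that plane contains `(q-1)/2`, `(q+1)/2` or `q` lines of `S`. -/
def P2b (K : Type) [Field K] (S : Set (Submodule K (Fin 4 → K))) (q : ℕ) : Prop :=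
  ∀ π ∈ pgPlane K, (linesIn K S π).ncard = q * (q + 1) / 2 →
    ∀ p ∈ pgPoint K, p ≤ π →
      (pencilS K S p π).ncard = (q - 1) / 2 ∨
      (pencilS K S p π).ncard = (q + 1) / 2 ∨
      (pencilS K S p π).ncard = q

/-- A point is black if it lies on exactly `q^2` lines of `S`. -/
def IsBlack (K : Type) [Field K] (S : Set (Submodule K (Fin 4 → K))) (q : ℕ)
    (p : Submodule K (Fin 4 → K)) : Prop :=
  p ∈ pgPoint K ∧ (linesThru K S p).ncard = q ^ 2

/-- A plane is tangent if it contains exactly `q^2` lines of `S`. -/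
def IsTangent (K : Type) [Field K] (S : Set (Submodule K (Fin 4 → K))) (q : ℕ)
    (π : Submodule K (Fin 4 → K)) : Prop :=
  π ∈ pgPlane K ∧ (linesIn K S π).ncard = q ^ 2

/-- A plane is secant if it contains exactly `q(q+1)/2` lines of `S`. -/
def IsSecant (K : Type) [Field K] (S : Set (Submodule K (Fin 4 → K))) (q : ℕ)
    (π : Submodule K (Fin 4 → K)) : Prop :=
  π ∈ pgPlane K ∧ (linesIn K S π).ncard = q * (q + 1) / 2

/-- For a secant plane `π`, the set `α(π)` of points of `π` lying on exactly
`(q-1)/2` lines of `S_π`. -/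
def alphaSet (K : Type) [Field K] (S : Set (Submodule K (Fin 4 → K))) (q : ℕ)
    (π : Submodule K (Fin 4 → K)) : Set (Submodule K (Fin 4 → K)) :=
  {p | p ∈ pgPoint K ∧ p ≤ π ∧ (pencilS K S p π).ncard = (q - 1) / 2}

/-- For a secant plane `π`, the set `β(π)` of points of `π` lying on exactly
`(q+1)/2` lines of `S_π`. -/
def betaSet (K : Type) [Field K] (S : Set (Submodule K (Fin 4 → K))) (q : ℕ)
    (π : Submodule K (Fin 4 → K)) : Set (Submodule K (Fin 4 → K)) :=
  {p | p ∈ pgPoint K ∧ p ≤ π ∧ (pencilS K S p π).ncard = (q + 1) / 2}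

/-- For a secant plane `π`, the set `γ(π)` of points of `π` lying on exactly
`q` lines of `S_π`. -/
def gammaSet (K : Type) [Field K] (S : Set (Submodule K (Fin 4 → K))) (q : ℕ)
    (π : Submodule K (Fin 4 → K)) : Set (Submodule K (Fin 4 → K)) :=
  {p | p ∈ pgPoint K ∧ p ≤ π ∧ (pencilS K S p π).ncard = q}

lemma aux_finite (K : Type) [Field K] [Fintype K] :
    Finite (Submodule K (Fin 4 → K)) :=
  Finite.of_injective (fun W => (W : Set (Fin 4 → K))) SetLike.coe_injective

lemma aux_point_count (K : Type) [Field K] [Fintype K]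
    (W : Submodule K (Fin 4 → K)) :
    {p | p ∈ pgPoint K ∧ p ≤ W}.ncard * (Fintype.card K - 1)
      = Fintype.card K ^ (Module.finrank K ↥W) - 1 := by
  classical
  haveI := aux_finite K
  have hfin : {p | p ∈ pgPoint K ∧ p ≤ W}.Finite := Set.toFinite _
  rw [Set.ncard_eq_toFinset_card _ hfin]
  set P : Finset (Submodule K (Fin 4 → K)) := hfin.toFinset with hPdef
  set T : Finset (Fin 4 → K) :=
    (Finset.univ.filter (fun v => v ∈ W)).erase 0 with hTdef
  have hTcard : T.card = Fintype.card K ^ (Module.finrank K ↥W) - 1 := by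
    rw [hTdef, Finset.card_erase_of_mem (by simp [W.zero_mem])]
    congr 1
    rw [← Fintype.card_subtype]
    exact Module.card_eq_pow_finrank (K := K)
  have hmap : ∀ v ∈ T, Submodule.span K {v} ∈ P := by
    intro v hv
    rw [hTdef] at hv
    simp only [Finset.mem_erase, Finset.mem_filter, Finset.mem_univ, true_and] at hv
    rw [hPdef, Set.Finite.mem_toFinset]
    refine ⟨finrank_span_singleton hv.1, ?_⟩
    rw [Submodule.span_le, Set.singleton_subset_iff]
    exact hv.2
  have hfiber := Finset.card_eq_sum_card_fiberwise hmap
  have hconst : ∀ p ∈ P, (T.filter (fun v => Submodule.span K {v} = p)).card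
      = Fintype.card K - 1 := by
    intro p hp
    rw [hPdef, Set.Finite.mem_toFinset] at hp
    obtain ⟨hp1, hpW⟩ := hp
    have hpr : Module.finrank K ↥p = 1 := hp1
    have hfe : T.filter (fun v => Submodule.span K {v} = p)
        = (Finset.univ.filter (fun v => v ∈ p)).erase 0 := by
      ext v
      simp only [hTdef, Finset.mem_filter, Finset.mem_erase, Finset.mem_univ, true_and]
      constructor
      · rintro ⟨⟨hv0, _⟩, hsp⟩
        exact ⟨hv0, hsp ▸ Submodule.mem_span_singleton_self v⟩
      · rintro ⟨hv0, hvp⟩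
        have hle : Submodule.span K {v} ≤ p := by
          rw [Submodule.span_le, Set.singleton_subset_iff]; exact hvp
        have heq : Submodule.span K {v} = p :=
          Submodule.eq_of_le_of_finrank_eq hle
            (by rw [finrank_span_singleton hv0, hpr])
        exact ⟨⟨hv0, hpW hvp⟩, heq⟩
    rw [hfe, Finset.card_erase_of_mem (by simp [p.zero_mem])]
    congr 1
    rw [← Fintype.card_subtype]
    have := Module.card_eq_pow_finrank (K := K) (V := ↥p)
    rw [hpr, pow_one] at this
    exact this
  rw [Finset.sum_congr rfl hconst, Finset.sum_const, smul_eq_mul] at hfiber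
  omega

lemma aux_cancel {n c q : ℕ} (hq : 2 ≤ q) (h : (n : ℤ) * ((q : ℤ) - 1) = ((c : ℤ)) * ((q : ℤ) - 1)) :
    n = c := by
  have hne : (q : ℤ) - 1 ≠ 0 := by
    have : (2 : ℤ) ≤ (q : ℤ) := by exact_mod_cast hq
    omega
  have := mul_right_cancel₀ hne h
  exact_mod_cast this

lemma aux_line_points (K : Type) [Field K] [Fintype K] {l : Submodule K (Fin 4 → K)}
    (hl : Module.finrank K ↥l = 2) :
    {p | p ∈ pgPoint K ∧ p ≤ l}.ncard = Fintype.card K + 1 := by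
  have h := aux_point_count K l
  rw [hl] at h
  set q := Fintype.card K with hqdef
  have hq2 : 2 ≤ q := Fintype.one_lt_card
  have h1 : 1 ≤ q := by omega
  have h2 : 1 ≤ q ^ 2 := Nat.one_le_pow _ _ (by omega)
  have hz : ((({p | p ∈ pgPoint K ∧ p ≤ l}).ncard : ℤ)) * ((q : ℤ) - 1)
      = (q : ℤ) ^ 2 - 1 := by
    have := congrArg (fun x : ℕ => (x : ℤ)) h
    push_cast [Nat.cast_sub h1, Nat.cast_sub h2] at this
    convert this using 2 <;> push_cast <;> ring
  refine aux_cancel hq2 ?_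
  rw [hz]; push_cast; ring

lemma aux_plane_points (K : Type) [Field K] [Fintype K] {π : Submodule K (Fin 4 → K)}
    (hπ : Module.finrank K ↥π = 3) :
    {p | p ∈ pgPoint K ∧ p ≤ π}.ncard = Fintype.card K ^ 2 + Fintype.card K + 1 := by
  have h := aux_point_count K π
  rw [hπ] at h
  set q := Fintype.card K with hqdef
  have hq2 : 2 ≤ q := Fintype.one_lt_card
  have h1 : 1 ≤ q := by omega
  have h2 : 1 ≤ q ^ 3 := Nat.one_le_pow _ _ (by omega)
  have hz : ((({p | p ∈ pgPoint K ∧ p ≤ π}).ncard : ℤ)) * ((q : ℤ) - 1)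
      = (q : ℤ) ^ 3 - 1 := by
    have := congrArg (fun x : ℕ => (x : ℤ)) h
    push_cast [Nat.cast_sub h1, Nat.cast_sub h2] at this
    convert this using 2 <;> push_cast <;> ring
  refine aux_cancel hq2 ?_
  rw [hz]; push_cast; ring

lemma aux_meet (K : Type) [Field K] {l l' π : Submodule K (Fin 4 → K)}
    (hl : Module.finrank K ↥l = 2) (hl' : Module.finrank K ↥l' = 2)
    (hlπ : l ≤ π) (hl'π : l' ≤ π) (hπ : Module.finrank K ↥π = 3)
    (hne : l ≠ l') : Module.finrank K ↥(l ⊓ l') = 1 := by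
  have hsum := Submodule.finrank_sup_add_finrank_inf_eq l l'
  have h1 : Module.finrank K ↥(l ⊔ l') ≤ 3 := hπ ▸ Submodule.finrank_mono (sup_le hlπ hl'π)
  have h2 : 2 ≤ Module.finrank K ↥(l ⊔ l') := hl ▸ Submodule.finrank_mono le_sup_left
  have h3 : Module.finrank K ↥(l ⊔ l') ≠ 2 := by
    intro h
    apply hne
    have e1 : l = l ⊔ l' := Submodule.eq_of_le_of_finrank_eq le_sup_left (hl.trans h.symm)
    have e2 : l' = l ⊔ l' := Submodule.eq_of_le_of_finrank_eq le_sup_right (hl'.trans h.symm)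
    rw [e1, ← e2]
  rw [hl, hl'] at hsum
  omega

lemma aux_meet_eq (K : Type) [Field K] {p l l' : Submodule K (Fin 4 → K)}
    (hp : Module.finrank K ↥p = 1) (hinf : Module.finrank K ↥(l ⊓ l') = 1)
    (h1 : p ≤ l) (h2 : p ≤ l') : p = l ⊓ l' :=
  Submodule.eq_of_le_of_finrank_eq (le_inf h1 h2) (by rw [hp, hinf])

/-- For every secant plane `π`, `|α(π)| = (q^2+q)/2` and
`|β(π)| = (q^2-q)/2`. -/
theorem stmt_11 (K : Type) [Field K] [Fintype K] (q : ℕ) (hq : Fintype.card K = q)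
    (hq_odd : Odd q) (S : Set (Submodule K (Fin 4 → K))) (hS : S ⊆ pgLine K)
    (h1 : P1 K S q) (h2 : P2 K S q) (h2a : P2a K S q) (h2b : P2b K S q) :
    ∀ π, IsSecant K S q π →
      (alphaSet K S q π).ncard = (q ^ 2 + q) / 2 ∧
      (betaSet K S q π).ncard = (q ^ 2 - q) / 2 := by
  classical
  haveI := aux_finite K
  intro π hsec
  obtain ⟨hπ3', hπcard⟩ := hsec
  have hπ3 : Module.finrank K ↥π = 3 := hπ3'
  obtain ⟨k, hk⟩ := hq_odd
  have hq2 : 2 ≤ q := hq ▸ Fintype.one_lt_card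
  have hk1 : 1 ≤ k := by omega
  -- the finset of lines of `S` in `π`
  have hLfin : (linesIn K S π).Finite := Set.toFinite _
  set L : Finset (Submodule K (Fin 4 → K)) := hLfin.toFinset with hLdef
  have hmemL : ∀ l, l ∈ L ↔ (l ∈ S ∧ l ≤ π) := by
    intro l; rw [hLdef, Set.Finite.mem_toFinset]; exact Iff.rfl
  have hLrank : ∀ l ∈ L, Module.finrank K ↥l = 2 := fun l hl => hS ((hmemL l).1 hl).1
  have hLle : ∀ l ∈ L, l ≤ π := fun l hl => ((hmemL l).1 hl).2
  have hLcard : L.card = (2*k+1) * (k+1) := by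
    have h := hπcard
    rw [Set.ncard_eq_toFinset_card _ hLfin] at h
    rw [← hLdef] at h
    rw [h, hk]
    have h2 : (2*k+1) * ((2*k+1)+1) = 2 * ((2*k+1)*(k+1)) := by ring
    rw [h2, Nat.mul_div_cancel_left _ (by norm_num : 0 < 2)]
  -- the finset of points of `π`
  have hPfin : {p | p ∈ pgPoint K ∧ p ≤ π}.Finite := Set.toFinite _
  set P : Finset (Submodule K (Fin 4 → K)) := hPfin.toFinset with hPdef
  have hmemP : ∀ p, p ∈ P ↔ (p ∈ pgPoint K ∧ p ≤ π) := by
    intro p; rw [hPdef, Set.Finite.mem_toFinset]; exact Iff.rfl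
  have hPcard : P.card = q^2 + q + 1 := by
    rw [hPdef, ← Set.ncard_eq_toFinset_card _ hPfin, aux_plane_points K hπ3, hq]
  -- pencil counts
  set n : Submodule K (Fin 4 → K) → ℕ := fun p => (L.filter (fun l => p ≤ l)).card
    with hndef
  have hpen : ∀ p, (pencilS K S p π).ncard = n p := by
    intro p
    have hseteq : pencilS K S p π = ↑(L.filter (fun l => p ≤ l)) := by
      ext l
      simp only [pencilS, Set.mem_setOf_eq, Finset.mem_coe, Finset.mem_filter]
      rw [hmemL]
      constructor
      · rintro ⟨hl1, hl2, hl3⟩; exact ⟨⟨hl1, hl3⟩, hl2⟩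
      · rintro ⟨⟨hl1, hl3⟩, hl2⟩; exact ⟨hl1, hl2, hl3⟩
    rw [hseteq, Set.ncard_coe_finset]
  -- first double count : sum of pencil sizes
  have hsum1 : ∑ p ∈ P, n p = L.card * (q + 1) := by
    have hswap : ∑ p ∈ P, n p = ∑ l ∈ L, (P.filter (fun p => p ≤ l)).card := by
      simp only [hndef, Finset.card_filter]
      exact Finset.sum_comm
    rw [hswap]
    apply Finset.sum_const_nat
    intro l hl
    have hlr := hLrank l hl
    have hlπ := hLle l hl
    have hfe : (P.filter (fun p => p ≤ l))
        = (Set.toFinite {p | p ∈ pgPoint K ∧ p ≤ l}).toFinset := by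
      ext p
      constructor
      · intro hp
        rw [Finset.mem_filter] at hp
        rw [Set.Finite.mem_toFinset]
        exact ⟨((hmemP p).1 hp.1).1, hp.2⟩
      · intro hp
        rw [Set.Finite.mem_toFinset] at hp
        rw [Finset.mem_filter]
        exact ⟨(hmemP p).2 ⟨hp.1, hp.2.trans hlπ⟩, hp.2⟩
    rw [hfe, ← Set.ncard_eq_toFinset_card _ _, aux_line_points K hlr, hq]
  -- second double count : ordered pairs of distinct lines
  have hsum2 : ∑ p ∈ P, (n p * n p - n p) = L.card * L.card - L.card := by
    rw [← Finset.offDiag_card]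
    have hmap : ∀ x ∈ L.offDiag, x.1 ⊓ x.2 ∈ P := by
      intro x hx
      rw [Finset.mem_offDiag] at hx
      obtain ⟨hx1, hx2, hne⟩ := hx
      refine (hmemP _).2 ⟨?_, inf_le_left.trans (hLle _ hx1)⟩
      exact aux_meet K (hLrank _ hx1) (hLrank _ hx2) (hLle _ hx1) (hLle _ hx2) hπ3 hne
    rw [Finset.card_eq_sum_card_fiberwise hmap]
    apply Finset.sum_congr rfl
    intro p hp
    have hp1 : Module.finrank K ↥p = 1 := ((hmemP p).1 hp).1
    have hfe : L.offDiag.filter (fun x => x.1 ⊓ x.2 = p)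
        = (L.filter (fun l => p ≤ l)).offDiag := by
      ext x
      simp only [Finset.mem_filter, Finset.mem_offDiag]
      constructor
      · rintro ⟨⟨hx1, hx2, hne⟩, heq⟩
        exact ⟨⟨hx1, heq ▸ inf_le_left⟩, ⟨hx2, heq ▸ inf_le_right⟩, hne⟩
      · rintro ⟨⟨hx1, hle1⟩, ⟨hx2, hle2⟩, hne⟩
        have hinf := aux_meet K (hLrank _ hx1) (hLrank _ hx2) (hLle _ hx1)
          (hLle _ hx2) hπ3 hne
        exact ⟨⟨hx1, hx2, hne⟩, (aux_meet_eq K hp1 hinf hle1 hle2).symm⟩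
    rw [hfe, Finset.offDiag_card]
  -- the possible pencil sizes
  have hval : ∀ p ∈ P, n p = k ∨ n p = k + 1 ∨ n p = 2*k+1 := by
    intro p hp
    obtain ⟨hp1, hpπ⟩ := (hmemP p).1 hp
    have hv := h2b π hπ3' hπcard p hp1 hpπ
    rw [hpen p] at hv
    omega
  -- the partition into the three classes
  set A := P.filter (fun p => n p = k) with hAdef
  set B := P.filter (fun p => n p = k+1) with hBdef
  set C := P.filter (fun p => n p = 2*k+1) with hCdef
  have hdAB : Disjoint A B := by
    rw [Finset.disjoint_left]; intro p hpA hpB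
    rw [hAdef, Finset.mem_filter] at hpA
    rw [hBdef, Finset.mem_filter] at hpB
    omega
  have hdABC : Disjoint (A ∪ B) C := by
    rw [Finset.disjoint_left]; intro p hpAB hpC
    rw [Finset.mem_union, hAdef, hBdef, Finset.mem_filter, Finset.mem_filter] at hpAB
    rw [hCdef, Finset.mem_filter] at hpC
    omega
  have hcover : A ∪ B ∪ C = P := by
    ext p
    simp only [Finset.mem_union, hAdef, hBdef, hCdef, Finset.mem_filter]
    constructor
    · rintro ((⟨h,_⟩|⟨h,_⟩)|⟨h,_⟩) <;> exact h
    · intro hp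
      rcases hval p hp with h|h|h
      · exact Or.inl (Or.inl ⟨hp, h⟩)
      · exact Or.inl (Or.inr ⟨hp, h⟩)
      · exact Or.inr ⟨hp, h⟩
  have hsumsplit : ∀ f : Submodule K (Fin 4 → K) → ℕ,
      ∑ p ∈ P, f p = ∑ p ∈ A, f p + ∑ p ∈ B, f p + ∑ p ∈ C, f p := by
    intro f
    rw [← hcover, Finset.sum_union hdABC, Finset.sum_union hdAB]
  -- the three equations, in ℕ
  have hcards : A.card + B.card + C.card = q^2 + q + 1 := by
    rw [← hPcard, ← hcover, Finset.card_union_of_disjoint hdABC,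
      Finset.card_union_of_disjoint hdAB]
  have hE2 : A.card * k + B.card * (k+1) + C.card * (2*k+1) = L.card * (q+1) := by
    rw [← hsum1, hsumsplit n]
    rw [Finset.sum_const_nat (fun p hp => (Finset.mem_filter.1 hp).2),
      Finset.sum_const_nat (fun p hp => (Finset.mem_filter.1 hp).2),
      Finset.sum_const_nat (fun p hp => (Finset.mem_filter.1 hp).2)]
  have hE3 : A.card * (k*k - k) + B.card * ((k+1)*(k+1) - (k+1))
      + C.card * ((2*k+1)*(2*k+1) - (2*k+1)) = L.card * L.card - L.card := by
    rw [← hsum2, hsumsplit (fun p => n p * n p - n p)]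
    rw [Finset.sum_const_nat (fun p hp => by rw [(Finset.mem_filter.1 hp).2]),
      Finset.sum_const_nat (fun p hp => by rw [(Finset.mem_filter.1 hp).2]),
      Finset.sum_const_nat (fun p hp => by rw [(Finset.mem_filter.1 hp).2])]
  -- pass to ℤ and solve the linear system
  have hkk : k ≤ k*k := Nat.le_mul_of_pos_left k hk1
  have hk1' : (k+1) ≤ (k+1)*(k+1) := Nat.le_mul_of_pos_left _ (by omega)
  have hk2' : (2*k+1) ≤ (2*k+1)*(2*k+1) := Nat.le_mul_of_pos_left _ (by omega)
  have hm' : L.card ≤ L.card * L.card := Nat.le_mul_of_pos_left _ (by rw [hLcard]; positivity)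
  have he1 : (A.card : ℤ) + B.card + C.card = 4*(k:ℤ)^2 + 6*(k:ℤ) + 3 := by
    have h := hcards
    rw [hk] at h
    have h2 : (2*k+1)^2 + (2*k+1) + 1 = 4*k^2+6*k+3 := by ring
    rw [h2] at h
    exact_mod_cast h
  have he2 : (A.card : ℤ)*(k:ℤ) + (B.card : ℤ)*((k:ℤ)+1) + (C.card : ℤ)*(2*(k:ℤ)+1)
      = (2*(k:ℤ)+1)*((k:ℤ)+1)*(2*(k:ℤ)+2) := by
    have h := hE2
    rw [hLcard, hk] at h
    have h2 := congrArg (fun x : ℕ => (x:ℤ)) h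
    push_cast at h2
    linear_combination h2
  have hLQ : (L.card : ℤ) = (2*(k:ℤ)+1)*((k:ℤ)+1) := by
    rw [hLcard]; push_cast; ring
  have cast1 : ((A.card * (k*k - k) : ℕ) : ℤ) = (A.card : ℤ) * ((k:ℤ)*(k:ℤ) - (k:ℤ)) := by
    rw [Nat.cast_mul, Nat.cast_sub hkk, Nat.cast_mul]
  have cast2 : ((B.card * ((k+1)*(k+1) - (k+1)) : ℕ) : ℤ)
      = (B.card : ℤ) * (((k:ℤ)+1)*((k:ℤ)+1) - ((k:ℤ)+1)) := by
    rw [Nat.cast_mul, Nat.cast_sub hk1']; push_cast; ring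
  have cast3 : ((C.card * ((2*k+1)*(2*k+1) - (2*k+1)) : ℕ) : ℤ)
      = (C.card : ℤ) * ((2*(k:ℤ)+1)*(2*(k:ℤ)+1) - (2*(k:ℤ)+1)) := by
    rw [Nat.cast_mul, Nat.cast_sub hk2']; push_cast; ring
  have cast4 : ((L.card * L.card - L.card : ℕ) : ℤ)
      = (L.card : ℤ)*(L.card : ℤ) - (L.card : ℤ) := by
    rw [Nat.cast_sub hm', Nat.cast_mul]
  have he3 : (A.card : ℤ)*((k:ℤ)*(k:ℤ) - (k:ℤ))
      + (B.card : ℤ)*(((k:ℤ)+1)*((k:ℤ)+1) - ((k:ℤ)+1))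
      + (C.card : ℤ)*((2*(k:ℤ)+1)*(2*(k:ℤ)+1) - (2*(k:ℤ)+1))
      = ((2*(k:ℤ)+1)*((k:ℤ)+1))*((2*(k:ℤ)+1)*((k:ℤ)+1)) - (2*(k:ℤ)+1)*((k:ℤ)+1) := by
    have h2 := congrArg (fun x : ℕ => (x:ℤ)) hE3
    simp only [Nat.cast_add] at h2
    rw [cast1, cast2, cast3, cast4, hLQ] at h2
    linear_combination h2
  have hk0 : (1:ℤ) ≤ (k:ℤ) := by exact_mod_cast hk1
  have hAcard : A.card = (2*k+1)*(k+1) := by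
    have hcomb : ((k:ℤ)+1) * (A.card : ℤ) = ((k:ℤ)+1) * ((2*(k:ℤ)+1)*((k:ℤ)+1)) := by
      linear_combination he3 - (3*(k:ℤ)+1)*he2 + ((k:ℤ)+1)*(2*(k:ℤ)+1)*he1
    have := mul_left_cancel₀ (by omega : ((k:ℤ)+1) ≠ 0) hcomb
    exact_mod_cast this
  have hBcard : B.card = (2*k+1)*k := by
    have hcomb : (k:ℤ) * (B.card : ℤ) = (k:ℤ) * ((2*(k:ℤ)+1)*(k:ℤ)) := by
      linear_combination -he3 + 3*(k:ℤ)*he2 - (k:ℤ)*(2*(k:ℤ)+1)*he1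
    have := mul_left_cancel₀ (by omega : (k:ℤ) ≠ 0) hcomb
    exact_mod_cast this
  constructor
  · have hset : alphaSet K S q π = ↑A := by
      ext p
      simp only [alphaSet, Set.mem_setOf_eq, Finset.mem_coe, hAdef, Finset.mem_filter, hmemP]
      constructor
      · rintro ⟨hp1, hp2, hp3⟩
        rw [hpen p] at hp3
        exact ⟨⟨hp1, hp2⟩, by omega⟩
      · rintro ⟨⟨hp1, hp2⟩, hp3⟩
        refine ⟨hp1, hp2, ?_⟩
        rw [hpen p]
        omega
    rw [hset, Set.ncard_coe_finset, hAcard, hk]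
    have h2 : (2*k+1)^2 + (2*k+1) = 2*((2*k+1)*(k+1)) := by ring
    rw [h2, Nat.mul_div_cancel_left _ (by norm_num : 0 < 2)]
  · have hset : betaSet K S q π = ↑B := by
      ext p
      simp only [betaSet, Set.mem_setOf_eq, Finset.mem_coe, hBdef, Finset.mem_filter, hmemP]
      constructor
      · rintro ⟨hp1, hp2, hp3⟩
        rw [hpen p] at hp3
        exact ⟨⟨hp1, hp2⟩, by omega⟩
      · rintro ⟨⟨hp1, hp2⟩, hp3⟩
        refine ⟨hp1, hp2, ?_⟩
        rw [hpen p]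
        omega
    rw [hset, Set.ncard_coe_finset, hBcard, hk]
    have h2 : (2*k+1)^2 - (2*k+1) = 2*((2*k+1)*k) :=
      Nat.sub_eq_of_eq_add (by ring : (2*k+1)^2 = 2*((2*k+1)*k) + (2*k+1))
    rw [h2, Nat.mul_div_cancel_left _ (by norm_num : 0 < 2)]
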